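/- Let G act primitively on Ω with G^Ω not cyclic, let F be a field, and let U be a G-invariant subspace of the permutation module F^Ω = (Ω →₀ F) with dim_F((Ω →₀ F)/U) ≥ 2. Then the quotient module (Ω →₀ F)/U affords a representation of the action of G on Ω: the map Ω → (Ω →₀ F)/U sending ω to the coset e_ω + U is injective and satisfies the intertwining property for the induced G-action on the quotient. -/

import Mathlib

/-- A representation of the action of `G` on `Ω` over the field `F`:
an injective map `φ : Ω → V` intertwining the `G`-action on `Ω` with a linear
`G`-action `ρ` on `V`. -/
def IsActionRep (F : Type*) [Field F] {G : Type*} [Group G] {Ω : Type*} [MulAction G Ω]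
    {V : Type*} [AddCommGroup V] [Module F V]
    (ρ : G →* (V ≃ₗ[F] V)) (φ : Ω → V) : Prop :=
  Function.Injective φ ∧ ∀ (g : G) (ω : Ω), φ (g • ω) = ρ g (φ ω)

/-- The `F`-linear dimension of the action of `G` on `Ω`: the infimum (in `ℕ∞`) of the
dimensions of finite-dimensional `F`-vector spaces affording a representation of the action. -/
noncomputable def lindim (F : Type*) [Field F] (G : Type*) [Group G] (Ω : Type*)
    [MulAction G Ω] : ℕ∞ :=
  ⨅ (n : ℕ) (_ : ∃ (ρ : G →* ((Fin n → F) ≃ₗ[F] (Fin n → F))) (φ : Ω → (Fin n → F)),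
      IsActionRep F ρ φ), (n : ℕ∞)


/-- The action of `G` on `Ω` is primitive: it is transitive and every `G`-block is trivial. -/
def IsPrimitiveAction (G : Type*) [Group G] (Ω : Type*) [MulAction G Ω] : Prop :=
  MulAction.IsPretransitive G Ω ∧
    ∀ B : Set Ω, MulAction.IsBlock G B → MulAction.IsTrivialBlock B

/-- Let `G` act primitively on `Ω` with `G^Ω` not cyclic, and let `U` be a
`G`-invariant subspace of the permutation module `Ω →₀ F` whose quotient has dimension at
least `2`. Then the quotient affords a representation of the group action: the induced linear
`G`-action on `(Ω →₀ F) ⧸ U` together with the injective map `ω ↦ e_ω + U`. -/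
theorem quotient_of_permutation_module_affords (F : Type*) [Field F] (G : Type*) [Group G]
    (Ω : Type*) [MulAction G Ω] (hprim : IsPrimitiveAction G Ω)
    (hnc : ¬ IsCyclic (MulAction.toPermHom G Ω).range)
    (U : Submodule F (Ω →₀ F))
    (hU : ∀ (g : G), ∀ x ∈ U, Finsupp.lmapDomain F F (fun ω : Ω => g • ω) x ∈ U)
    (hcodim : 2 ≤ Module.rank F ((Ω →₀ F) ⧸ U)) :
    ∃ ρ : G →* (((Ω →₀ F) ⧸ U) ≃ₗ[F] ((Ω →₀ F) ⧸ U)),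
      (∀ (g : G) (x : Ω →₀ F),
        ρ g (Submodule.Quotient.mk x) =
          Submodule.Quotient.mk (Finsupp.lmapDomain F F (fun ω : Ω => g • ω) x)) ∧
      IsActionRep F ρ
        (fun ω : Ω => (Submodule.Quotient.mk (Finsupp.single ω 1) : (Ω →₀ F) ⧸ U)) := by
  classical
  obtain ⟨-, hblocks⟩ := hprim
  -- the linear automorphism of Ω →₀ F induced by g
  let e : G → ((Ω →₀ F) ≃ₗ[F] (Ω →₀ F)) := fun g =>
    Finsupp.domLCongr (MulAction.toPerm g)
  have he_apply : ∀ (g : G) (x : Ω →₀ F),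
      e g x = Finsupp.lmapDomain F F (fun ω : Ω => g • ω) x := by
    intro g x
    simp only [e, Finsupp.domLCongr_apply, Finsupp.domCongr_apply,
      Finsupp.equivMapDomain_eq_mapDomain, Finsupp.lmapDomain_apply]
    rfl
  have hcomp : ∀ (g h : G) (x : Ω →₀ F),
      Finsupp.lmapDomain F F (fun ω : Ω => g • ω)
        (Finsupp.lmapDomain F F (fun ω : Ω => h • ω) x) =
      Finsupp.lmapDomain F F (fun ω : Ω => (g * h) • ω) x := by
    intro g h x
    simp only [Finsupp.lmapDomain_apply, ← Finsupp.mapDomain_comp]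
    congr 1
    funext ω
    simp [Function.comp, mul_smul]
  have he_map : ∀ g : G, U.map (e g : (Ω →₀ F) →ₗ[F] (Ω →₀ F)) = U := by
    intro g
    apply le_antisymm
    · rintro _ ⟨x, hx, rfl⟩
      rw [LinearEquiv.coe_coe, he_apply]
      exact hU g x hx
    · intro x hx
      refine ⟨e g⁻¹ x, by rw [he_apply]; exact hU g⁻¹ x hx, ?_⟩
      simp only [LinearEquiv.coe_coe, he_apply]
      rw [hcomp]
      simp only [mul_inv_cancel, Finsupp.lmapDomain_apply, one_smul]
      exact Finsupp.mapDomain_id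
  -- the induced equivalence of the quotient
  let ρ' : G → (((Ω →₀ F) ⧸ U) ≃ₗ[F] ((Ω →₀ F) ⧸ U)) := fun g =>
    Submodule.Quotient.equiv U U (e g) (he_map g)
  have hρ'_apply : ∀ (g : G) (x : Ω →₀ F),
      ρ' g (Submodule.Quotient.mk x) =
        Submodule.Quotient.mk (Finsupp.lmapDomain F F (fun ω : Ω => g • ω) x) := by
    intro g x
    have h1 : (ρ' g) (Submodule.Quotient.mk x) = Submodule.Quotient.mk (e g x) := rfl
    rw [h1, he_apply]
  have hid : ∀ x : Ω →₀ F, Finsupp.lmapDomain F F (fun ω : Ω => (1 : G) • ω) x = x := by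
    intro x
    simp only [Finsupp.lmapDomain_apply, one_smul]
    exact Finsupp.mapDomain_id
  let ρ : G →* (((Ω →₀ F) ⧸ U) ≃ₗ[F] ((Ω →₀ F) ⧸ U)) :=
    { toFun := ρ'
      map_one' := by
        apply LinearEquiv.toLinearMap_injective
        apply LinearMap.ext
        intro q
        induction q using Submodule.Quotient.induction_on with
        | _ x =>
          show ρ' 1 (Submodule.Quotient.mk x) = Submodule.Quotient.mk x
          rw [hρ'_apply, hid]
      map_mul' := by
        intro g h
        apply LinearEquiv.toLinearMap_injective
        apply LinearMap.ext
        intro q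
        induction q using Submodule.Quotient.induction_on with
        | _ x =>
          show ρ' (g * h) (Submodule.Quotient.mk x) =
            ρ' g (ρ' h (Submodule.Quotient.mk x))
          rw [hρ'_apply, hρ'_apply, hρ'_apply, hcomp] }
  refine ⟨ρ, hρ'_apply, ?_, ?_⟩
  · -- injectivity
    intro ω₁ ω₂ h
    by_contra hne
    simp only at h
    have key : Finsupp.single ω₁ (1 : F) - Finsupp.single ω₂ 1 ∈ U :=
      (Submodule.Quotient.eq U).mp h
    set B : Set Ω := {ω | Finsupp.single ω₁ (1 : F) - Finsupp.single ω 1 ∈ U} with hBdef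
    have hB : MulAction.IsBlock G B := by
      rw [MulAction.isBlock_iff_smul_eq_of_mem]
      intro g a ha hga
      have himg : Finsupp.single (g • ω₁) (1 : F) - Finsupp.single (g • a) 1 ∈ U := by
        have := hU g _ ha
        rwa [map_sub, Finsupp.lmapDomain_apply, Finsupp.lmapDomain_apply,
          Finsupp.mapDomain_single, Finsupp.mapDomain_single] at this
      have hfix : Finsupp.single (g • ω₁) (1 : F) - Finsupp.single ω₁ 1 ∈ U := by
        have := U.sub_mem himg hga
        simpa using U.sub_mem himg hga
      ext ω'
      rw [Set.mem_smul_set_iff_inv_smul_mem]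
      constructor
      · intro hmem
        have h1 : Finsupp.single (g • ω₁) (1 : F) - Finsupp.single ω' 1 ∈ U := by
          have := hU g _ hmem
          rwa [map_sub, Finsupp.lmapDomain_apply, Finsupp.lmapDomain_apply,
            Finsupp.mapDomain_single, Finsupp.mapDomain_single, smul_inv_smul] at this
        have := U.sub_mem h1 hfix
        show Finsupp.single ω₁ (1 : F) - Finsupp.single ω' 1 ∈ U
        simpa using this
      · intro hmem
        have h1 : Finsupp.single (g • ω₁) (1 : F) - Finsupp.single ω' 1 ∈ U := by
          have := U.add_mem hfix hmem
          simpa using this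
        have := hU g⁻¹ _ h1
        rwa [map_sub, Finsupp.lmapDomain_apply, Finsupp.lmapDomain_apply,
          Finsupp.mapDomain_single, Finsupp.mapDomain_single, inv_smul_smul] at this
    have hBuniv : B = Set.univ := by
      rcases hblocks B hB with htriv | htop
      · exact absurd (htriv (by simp [hBdef]) key) hne
      · exact htop
    -- then the quotient is spanned by a single vector
    have hspan : (⊤ : Submodule F ((Ω →₀ F) ⧸ U)) =
        Submodule.span F {(Submodule.Quotient.mk (Finsupp.single ω₁ 1) : (Ω →₀ F) ⧸ U)} := by
      rw [eq_comm, eq_top_iff]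
      rintro q -
      induction q using Submodule.Quotient.induction_on with
      | _ x =>
        induction x using Finsupp.induction_linear with
        | zero => simp
        | add a b hha hhb =>
          rw [Submodule.Quotient.mk_add]
          exact Submodule.add_mem _ hha hhb
        | single ω c =>
          have hωB : ω ∈ B := by rw [hBuniv]; trivial
          have : (Submodule.Quotient.mk (Finsupp.single ω c) : (Ω →₀ F) ⧸ U) =
              c • (Submodule.Quotient.mk (Finsupp.single ω₁ 1) : (Ω →₀ F) ⧸ U) := by
            rw [← Submodule.Quotient.mk_smul, Submodule.Quotient.eq]
            have : Finsupp.single ω c - c • Finsupp.single ω₁ 1 =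
                (-c) • (Finsupp.single ω₁ (1 : F) - Finsupp.single ω 1) := by
              rw [smul_sub, Finsupp.smul_single, Finsupp.smul_single]
              simp [neg_smul]
              abel
            rw [this]
            exact U.smul_mem _ hωB
          rw [this]
          exact Submodule.smul_mem _ _ (Submodule.subset_span rfl)
    have hrank : Module.rank F ((Ω →₀ F) ⧸ U) ≤ 1 := by
      have h1 := rank_span_le (R := F)
        {(Submodule.Quotient.mk (Finsupp.single ω₁ 1) : (Ω →₀ F) ⧸ U)}
      rw [Cardinal.mk_singleton] at h1
      calc Module.rank F ((Ω →₀ F) ⧸ U)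
          = Module.rank F (⊤ : Submodule F ((Ω →₀ F) ⧸ U)) := (rank_top F _).symm
        _ = Module.rank F (Submodule.span F
              {(Submodule.Quotient.mk (Finsupp.single ω₁ 1) : (Ω →₀ F) ⧸ U)}) := by rw [hspan]
        _ ≤ 1 := h1
    exact absurd (le_trans hcodim hrank) (by norm_num)
  · -- intertwining
    intro g ω
    show _ = ρ' g (Submodule.Quotient.mk (Finsupp.single ω 1))
    rw [hρ'_apply, Finsupp.lmapDomain_apply, Finsupp.mapDomain_single]
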